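/- If both (A - I)^{-1} ≥ 0 and (A + I)^{-1} ≥ 0 entrywise (i.e., the interval matrix [A - I, A + I] is inverse nonnegative), then for every b ≥ 0 the absolute value equation Ax - |x| = b has a unique solution, and this solution is nonnegative. -/

import Mathlib

open Matrix

/-- Componentwise absolute value of a vector. -/
noncomputable def absv {n : ℕ} (x : Fin n → ℝ) : Fin n → ℝ := fun i => |x i|

/-- Euclidean norm of a vector. -/
noncomputable def vecEnorm {n : ℕ} (x : Fin n → ℝ) : ℝ := Real.sqrt (∑ i, x i ^ 2)

/-- Largest singular value (spectral / operator 2-norm). -/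
noncomputable def sigmaMax {n : ℕ} (A : Matrix (Fin n) (Fin n) ℝ) : ℝ :=
  sSup {r | ∃ x : Fin n → ℝ, vecEnorm x = 1 ∧ r = vecEnorm (A.mulVec x)}

/-- Smallest singular value. -/
noncomputable def sigmaMin {n : ℕ} (A : Matrix (Fin n) (Fin n) ℝ) : ℝ :=
  sInf {r | ∃ x : Fin n → ℝ, vecEnorm x = 1 ∧ r = vecEnorm (A.mulVec x)}

/-- Spectral radius of a real matrix (via its complex spectrum). -/
noncomputable def specRad {n : ℕ} (A : Matrix (Fin n) (Fin n) ℝ) : ENNReal :=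
  spectralRadius ℂ (A.map (Complex.ofReal ·))

lemma mulVec_nonneg' {n : ℕ} {M : Matrix (Fin n) (Fin n) ℝ} {v : Fin n → ℝ}
    (hM : ∀ i j, 0 ≤ M i j) (hv : ∀ i, 0 ≤ v i) : ∀ i, 0 ≤ M.mulVec v i := by
  intro i
  simp only [Matrix.mulVec, dotProduct]
  exact Finset.sum_nonneg fun j _ => mul_nonneg (hM i j) (hv j)

theorem stmt14 {n : ℕ} (A : Matrix (Fin n) (Fin n) ℝ)
    (h1 : IsUnit (A - 1).det) (h2 : IsUnit (A + 1).det)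
    (h1n : ∀ i j, 0 ≤ (A - 1)⁻¹ i j) (h2n : ∀ i j, 0 ≤ (A + 1)⁻¹ i j)
    (b : Fin n → ℝ) (hb : ∀ i, 0 ≤ b i) :
    ∃ x : Fin n → ℝ, (A.mulVec x - absv x = b ∧ ∀ i, 0 ≤ x i) ∧
      ∀ y : Fin n → ℝ, A.mulVec y - absv y = b → y = x := by
  set x : Fin n → ℝ := (A - 1)⁻¹.mulVec b with hx
  have hxnn : ∀ i, 0 ≤ x i := mulVec_nonneg' h1n hb
  have hinv : (A - 1) * (A - 1)⁻¹ = 1 := mul_nonsing_inv _ h1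
  have hinv' : (A - 1)⁻¹ * (A - 1) = 1 := nonsing_inv_mul _ h1
  have hAx : (A - 1).mulVec x = b := by
    rw [hx, Matrix.mulVec_mulVec, hinv, Matrix.one_mulVec]
  have habs : absv x = x := by
    funext i; exact abs_of_nonneg (hxnn i)
  refine ⟨x, ⟨?_, hxnn⟩, ?_⟩
  · rw [habs]
    calc A.mulVec x - x = (A - 1).mulVec x := by
          rw [Matrix.sub_mulVec, Matrix.one_mulVec]
      _ = b := hAx
  · intro y hy
    have hyid : y = (A - 1)⁻¹.mulVec ((A - 1).mulVec y) := by
      rw [Matrix.mulVec_mulVec, hinv', Matrix.one_mulVec]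
    have hkey : (A - 1).mulVec y = fun i => b i + (absv y i - y i) := by
      funext i
      have := congrFun hy i
      simp only [Pi.sub_apply] at this
      simp [Matrix.sub_mulVec, Matrix.one_mulVec]
      linarith
    have hynn : ∀ i, 0 ≤ y i := by
      rw [hyid]
      apply mulVec_nonneg' h1n
      intro i
      rw [hkey]
      have : y i ≤ |y i| := le_abs_self _
      simp only [absv]
      have := hb i
      linarith [le_abs_self (y i)]
    have habsy : absv y = y := by
      funext i; exact abs_of_nonneg (hynn i)
    have : (A - 1).mulVec y = b := by
      rw [Matrix.sub_mulVec, Matrix.one_mulVec]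
      rw [habsy] at hy
      exact hy
    rw [hyid, this, hx]
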